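/- Let G be a finite {C4, C5}-free simple graph containing six distinct vertices u, v, u₁, v₁, v₂, v₃ such that uv is an edge, v v₁ v₂ is a triangle, v₂ v₃ u₁ is a triangle, and the degrees in G satisfy deg(u) = deg(u₁) = 3 and deg(v) = deg(v₁) = deg(v₂) = deg(v₃) = 4. Then the subgraph of G induced by {u, v, u₁, v₁, v₂, v₃} is (P3+P4, 4)-reducible in G; in particular, G contains a (P3+P4, 4)-reducible induced subgraph with at most 6 vertices. -/

import Mathlib

open Finset

/-- The restriction of a graph `G` to a vertex set `A`, viewed as a graph on the same
vertex type: the edges of `G` with both endpoints in `A`. -/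
def gOn {V : Type*} (G : SimpleGraph V) (A : Set V) : SimpleGraph V where
  Adj u v := u ∈ A ∧ v ∈ A ∧ G.Adj u v
  symm := ⟨fun u v ⟨ha, hb, h⟩ => ⟨hb, ha, h.symm⟩⟩
  loopless := ⟨fun v h => G.loopless.irrefl v h.2.2⟩

/-- The degree of a vertex `v` in `G`. -/
noncomputable def ndeg {V : Type*} (G : SimpleGraph V) (v : V) : ℕ :=
  {w | G.Adj v w}.ncard

/-- The degree of a vertex `v` in the subgraph of `G` induced on `A`. -/
noncomputable def degOn {V : Type*} (G : SimpleGraph V) (A : Set V) (v : V) : ℕ :=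
  {w ∈ A | G.Adj v w}.ncard

/-- The subgraph of `G` induced on `A` has a proper coloring from the lists `L`. -/
def ColorableOn {V α : Type*} (G : SimpleGraph V) (A : Set V) (L : V → Finset α) : Prop :=
  ∃ φ : V → α, (∀ v ∈ A, φ v ∈ L v) ∧ ∀ u ∈ A, ∀ w ∈ A, G.Adj u w → φ u ≠ φ w

/-- `φ` is a proper coloring of `G` with `φ v ∈ L v` for every vertex `v`. -/
def IsLColoring {V α : Type*} (G : SimpleGraph V) (L : V → Finset α) (φ : V → α) : Prop :=
  (∀ v, φ v ∈ L v) ∧ ∀ ⦃u w⦄, G.Adj u w → φ u ≠ φ w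

/-- `S` is `(P3+P4)`-independent in `H`: there is no path on 3 vertices (length 2) and
no path on 4 vertices (length 3) in `H` whose two endpoints both belong to `S`. -/
def P34Indep {V : Type*} (H : SimpleGraph V) (S : Set V) : Prop :=
  ∀ u ∈ S, ∀ v ∈ S, ∀ p : H.Walk u v, p.IsPath → p.length ≠ 2 ∧ p.length ≠ 3

/-- `G` contains no cycle of length 4 and no cycle of length 5. -/
def C45Free {V : Type*} (G : SimpleGraph V) : Prop :=
  ∀ (v : V) (c : G.Walk v v), c.IsCycle → c.length ≠ 4 ∧ c.length ≠ 5

/-- Condition (FIX) for the subgraph of `G` induced on `A`, with parameter `k`. -/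
def FIX {V : Type*} (G : SimpleGraph V) (A : Set V) (k : ℕ) : Prop :=
  ∀ v ∈ A, ∀ L : V → Finset ℕ,
    1 ≤ (L v).card →
    (∀ w ∈ A, w ≠ v → (degOn G A w : ℤ) + k - ndeg G w ≤ (L w).card) →
    ColorableOn G A L

/-- Condition (FORB) for the subgraph of `G` induced on `A`, with parameter `k`. -/
def FORB {V : Type*} (G : SimpleGraph V) (A : Set V) (k : ℕ) : Prop :=
  ∀ S : Set V, S ⊆ A → P34Indep (gOn G A) S → S.ncard ≤ k - 2 →
    ∀ L : V → Finset ℕ,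
      (∀ w ∈ A,
        (degOn G A w : ℤ) + k - ndeg G w - S.indicator (fun _ => (1 : ℤ)) w ≤ (L w).card) →
      ColorableOn G A L

/-- The subgraph of `G` induced on `A` is `(P3+P4, k)`-reducible in `G`. -/
def Reducible {V : Type*} (G : SimpleGraph V) (A : Set V) (k : ℕ) : Prop :=
  FIX G A k ∧ FORB G A k

/-- `G` with the list assignment `L` is weighted `ε`-flexible. -/
def WeightedFlexible {V α : Type*} [Fintype V] (G : SimpleGraph V)
    (L : V → Finset α) (ε : ℝ) : Prop :=
  ∀ w : V → α → ℝ, (∀ v, ∀ c ∈ L v, 0 ≤ w v c) →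
    ∃ φ : V → α, IsLColoring G L φ ∧
      ε * (∑ v, ∑ c ∈ L v, w v c) ≤ ∑ v, w v (φ v)


private lemma pick2' (s : Finset ℕ) (a : ℕ) (h : 2 ≤ s.card) : ∃ x ∈ s, x ≠ a := by
  have h1 : s.card ≤ (s \ {a}).card + ({a} : Finset ℕ).card :=
    Finset.card_le_card_sdiff_add_card
  simp only [Finset.card_singleton] at h1
  obtain ⟨x, hx⟩ := Finset.card_pos.mp (show 0 < (s \ {a}).card by omega)
  rw [Finset.mem_sdiff] at hx
  exact ⟨x, hx.1, by simpa using hx.2⟩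

private lemma pick3' (s : Finset ℕ) (a b : ℕ) (h : 3 ≤ s.card) : ∃ x ∈ s, x ≠ a ∧ x ≠ b := by
  have h1 : s.card ≤ (s \ {a, b}).card + ({a, b} : Finset ℕ).card :=
    Finset.card_le_card_sdiff_add_card
  have h3 : ({a, b} : Finset ℕ).card ≤ 2 := by
    apply le_trans (Finset.card_insert_le _ _); simp
  obtain ⟨x, hx⟩ := Finset.card_pos.mp (show 0 < (s \ {a, b}).card by omega)
  rw [Finset.mem_sdiff] at hx
  simp only [Finset.mem_insert, Finset.mem_singleton] at hx
  exact ⟨x, hx.1, by tauto⟩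

private lemma no_c4' {V : Type} {G : SimpleGraph V} (hfree : C45Free G)
    {a b c d : V} (h1 : G.Adj a b) (h2 : G.Adj b c) (h3 : G.Adj c d) (h4 : G.Adj d a)
    (hac : a ≠ c) (hbd : b ≠ d) : False := by
  have hcyc : (SimpleGraph.Walk.cons h1 (SimpleGraph.Walk.cons h2
      (SimpleGraph.Walk.cons h3 (SimpleGraph.Walk.cons h4 SimpleGraph.Walk.nil)))).IsCycle := by
    rw [SimpleGraph.Walk.isCycle_def]
    refine ⟨?_, by simp, ?_⟩
    · rw [SimpleGraph.Walk.isTrail_def]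
      have e1 := h1.ne; have e2 := h2.ne; have e3 := h3.ne; have e4 := h4.ne
      simp [Sym2.eq_iff]
      tauto
    · have e1 := h1.ne.symm; have e2 := h2.ne; have e3 := h3.ne; have e4 := h4.ne.symm
      simp
      tauto
  exact (hfree a _ hcyc).1 rfl

private lemma no_p3' {V : Type} {H : SimpleGraph V} {S : Set V}
    (hS : P34Indep H S)
    {a m b : V} (ha : a ∈ S) (hb : b ∈ S)
    (h1 : H.Adj a m) (h2 : H.Adj m b) (hab : a ≠ b) : False := by
  have hp : (SimpleGraph.Walk.cons h1 (SimpleGraph.Walk.cons h2 SimpleGraph.Walk.nil)).IsPath := by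
    rw [SimpleGraph.Walk.isPath_def]
    have := h1.ne; have := h2.ne
    simp; tauto
  exact (hS a ha b hb _ hp).1 rfl

private lemma no_p4' {V : Type} {H : SimpleGraph V} {S : Set V}
    (hS : P34Indep H S)
    {a m n b : V} (ha : a ∈ S) (hb : b ∈ S)
    (h1 : H.Adj a m) (h2 : H.Adj m n) (h3 : H.Adj n b)
    (han : a ≠ n) (hab : a ≠ b) (hmb : m ≠ b) : False := by
  have hp : (SimpleGraph.Walk.cons h1 (SimpleGraph.Walk.cons h2
      (SimpleGraph.Walk.cons h3 SimpleGraph.Walk.nil))).IsPath := by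
    rw [SimpleGraph.Walk.isPath_def]
    have := h1.ne; have := h2.ne; have := h3.ne
    simp; tauto
  exact (hS a ha b hb _ hp).2 rfl

set_option maxHeartbeats 1000000 in
/-- (Lemma on the 3-4 edge.) In a `{C4, C5}`-free graph with the given
configuration, the induced subgraph on `{u, v, u₁, v₁, v₂, v₃}` is `(P3+P4, 4)`-reducible;
in particular `G` contains a `(P3+P4, 4)`-reducible induced subgraph on at most 6 vertices. -/
theorem reducible_34edge {V : Type} [Fintype V] (G : SimpleGraph V) (hfree : C45Free G)
    (u v u₁ v₁ v₂ v₃ : V)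
    (hdist : ([u, v, u₁, v₁, v₂, v₃] : List V).Pairwise (· ≠ ·))
    (huv : G.Adj u v)
    (htri₁ : G.Adj v v₁ ∧ G.Adj v₁ v₂ ∧ G.Adj v₂ v)
    (htri₂ : G.Adj v₂ v₃ ∧ G.Adj v₃ u₁ ∧ G.Adj u₁ v₂)
    (hdu : ndeg G u = 3) (hdu₁ : ndeg G u₁ = 3)
    (hdv : ndeg G v = 4) (hdv₁ : ndeg G v₁ = 4)
    (hdv₂ : ndeg G v₂ = 4) (hdv₃ : ndeg G v₃ = 4) :
    Reducible G ({u, v, u₁, v₁, v₂, v₃} : Set V) 4 ∧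
      ∃ A : Set V, A.Nonempty ∧ A.ncard ≤ 6 ∧ Reducible G A 4 := by
  classical
  obtain ⟨hvv₁, hv₁v₂, hv₂v⟩ := htri₁
  obtain ⟨hv₂v₃, hv₃u₁, hu₁v₂⟩ := htri₂
  simp only [List.pairwise_cons, List.mem_cons, List.not_mem_nil, List.mem_singleton,
    forall_eq_or_imp, forall_eq, List.Pairwise.nil, and_true] at hdist
  obtain ⟨⟨d1,d2,d3,d4,d5,-⟩,⟨d6,d7,d8,d9,-⟩,⟨d10,d11,d12,-⟩,⟨d13,d14,-⟩,⟨d15,-⟩,-⟩ := hdist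
  have s1 := d1.symm; have s2 := d2.symm; have s3 := d3.symm; have s4 := d4.symm
  have s5 := d5.symm; have s6 := d6.symm; have s7 := d7.symm; have s8 := d8.symm
  have s9 := d9.symm; have s10 := d10.symm; have s11 := d11.symm; have s12 := d12.symm
  have s13 := d13.symm; have s14 := d14.symm; have s15 := d15.symm
  set A : Set V := {u, v, u₁, v₁, v₂, v₃} with hA
  have memu : u ∈ A := by simp [hA]
  have memv : v ∈ A := by simp [hA]
  have memu₁ : u₁ ∈ A := by simp [hA]
  have memv₁ : v₁ ∈ A := by simp [hA]
  have memv₂ : v₂ ∈ A := by simp [hA]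
  have memv₃ : v₃ ∈ A := by simp [hA]
  -- non-adjacencies forced by C4-freeness
  have nuv₁ : ¬ G.Adj u v₁ := fun h => no_c4' hfree h hv₁v₂ hv₂v huv.symm d4 s7
  have nuv₂ : ¬ G.Adj u v₂ := fun h => no_c4' hfree h hv₁v₂.symm hvv₁.symm huv.symm d3 s8
  have nuv₃ : ¬ G.Adj u v₃ := fun h => no_c4' hfree h hv₂v₃.symm hv₂v huv.symm d4 s9
  have nuu₁ : ¬ G.Adj u u₁ := fun h => no_c4' hfree h hu₁v₂ hv₂v huv.symm d4 s6
  have nvv₃ : ¬ G.Adj v v₃ := fun h => no_c4' hfree h hv₃u₁ hu₁v₂ hv₂v d6 s15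
  have nvu₁ : ¬ G.Adj v u₁ := fun h => no_c4' hfree h hv₃u₁.symm hv₂v₃.symm hv₂v d9 d11
  have nv₁v₃ : ¬ G.Adj v₁ v₃ := fun h => no_c4' hfree h hv₃u₁ hu₁v₂ hv₁v₂.symm s10 s15
  have nv₁u₁ : ¬ G.Adj v₁ u₁ := fun h => no_c4' hfree h hv₃u₁.symm hv₂v₃.symm hv₁v₂.symm d14 d11
  have nuv₁' : ¬ G.Adj v₁ u := fun h => nuv₁ h.symm
  have nuv₂' : ¬ G.Adj v₂ u := fun h => nuv₂ h.symm
  have nuv₃' : ¬ G.Adj v₃ u := fun h => nuv₃ h.symm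
  have nuu₁' : ¬ G.Adj u₁ u := fun h => nuu₁ h.symm
  have nvv₃' : ¬ G.Adj v₃ v := fun h => nvv₃ h.symm
  have nvu₁' : ¬ G.Adj u₁ v := fun h => nvu₁ h.symm
  have nv₁v₃' : ¬ G.Adj v₃ v₁ := fun h => nv₁v₃ h.symm
  have nv₁u₁' : ¬ G.Adj u₁ v₁ := fun h => nv₁u₁ h.symm
  have nloop : ∀ z : V, ¬ G.Adj z z := fun z => G.loopless.irrefl z
  -- exact adjacency structure inside A
  have adjchar : ∀ x ∈ A, ∀ y ∈ A, G.Adj x y →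
      ((x = u ∧ y = v) ∨ (x = v ∧ y = u) ∨ (x = v ∧ y = v₁) ∨ (x = v₁ ∧ y = v) ∨
       (x = v ∧ y = v₂) ∨ (x = v₂ ∧ y = v) ∨ (x = v₁ ∧ y = v₂) ∨ (x = v₂ ∧ y = v₁) ∨
       (x = v₂ ∧ y = v₃) ∨ (x = v₃ ∧ y = v₂) ∨ (x = v₂ ∧ y = u₁) ∨ (x = u₁ ∧ y = v₂) ∨
       (x = v₃ ∧ y = u₁) ∨ (x = u₁ ∧ y = v₃)) := by
    intro x hx y hy hadj
    rw [hA] at hx hy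
    simp only [Set.mem_insert_iff, Set.mem_singleton_iff] at hx hy
    rcases hx with rfl|rfl|rfl|rfl|rfl|rfl <;> rcases hy with rfl|rfl|rfl|rfl|rfl|rfl <;>
      first
        | exact absurd hadj (nloop _)
        | exact absurd hadj (by assumption)
        | simp
  -- a coloring from six suitable colors
  have build : ∀ (L : V → Finset ℕ) (cu cv c1 c2 c3 cf : ℕ),
      cu ∈ L u → cv ∈ L v → c1 ∈ L v₁ → c2 ∈ L v₂ → c3 ∈ L v₃ → cf ∈ L u₁ →
      cu ≠ cv → cv ≠ c1 → cv ≠ c2 → c1 ≠ c2 → c2 ≠ c3 → c2 ≠ cf → c3 ≠ cf →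
      ColorableOn G A L := by
    intro L cu cv c1 c2 c3 cf mu mv m1 m2 m3 mf e1 e2 e3 e4 e5 e6 e7
    set φ : V → ℕ := fun x => if x = u then cu else if x = v then cv else if x = v₁ then c1
      else if x = v₂ then c2 else if x = v₃ then c3 else cf with hφ
    have pu : φ u = cu := by simp [hφ]
    have pv : φ v = cv := by simp [hφ, s1]
    have p1 : φ v₁ = c1 := by simp [hφ, s3, s7]
    have p2 : φ v₂ = c2 := by simp [hφ, s4, s8, s13]
    have p3 : φ v₃ = c3 := by simp [hφ, s5, s9, s14, s15]
    have pf : φ u₁ = cf := by simp [hφ, s2, s6, d10, d11, d12]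
    refine ⟨φ, ?_, ?_⟩
    · intro x hx
      rw [hA] at hx
      simp only [Set.mem_insert_iff, Set.mem_singleton_iff] at hx
      rcases hx with rfl|rfl|rfl|rfl|rfl|rfl
      exacts [pu ▸ mu, pv ▸ mv, pf ▸ mf, p1 ▸ m1, p2 ▸ m2, p3 ▸ m3]
    · intro x hx y hy hadj
      rcases adjchar x hx y hy hadj with
        (⟨rfl,rfl⟩|⟨rfl,rfl⟩|⟨rfl,rfl⟩|⟨rfl,rfl⟩|⟨rfl,rfl⟩|⟨rfl,rfl⟩|⟨rfl,rfl⟩|⟨rfl,rfl⟩|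
         ⟨rfl,rfl⟩|⟨rfl,rfl⟩|⟨rfl,rfl⟩|⟨rfl,rfl⟩|⟨rfl,rfl⟩|⟨rfl,rfl⟩)
      exacts [by rw [pu, pv]; exact e1, by rw [pv, pu]; exact e1.symm,
        by rw [pv, p1]; exact e2, by rw [p1, pv]; exact e2.symm,
        by rw [pv, p2]; exact e3, by rw [p2, pv]; exact e3.symm,
        by rw [p1, p2]; exact e4, by rw [p2, p1]; exact e4.symm,
        by rw [p2, p3]; exact e5, by rw [p3, p2]; exact e5.symm,
        by rw [p2, pf]; exact e6, by rw [pf, p2]; exact e6.symm,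
        by rw [p3, pf]; exact e7, by rw [pf, p3]; exact e7.symm]
  -- greedy colorings in six different orders
  have O1 : ∀ L : V → Finset ℕ, 1 ≤ (L u).card → 2 ≤ (L v).card → 2 ≤ (L v₁).card →
      3 ≤ (L v₂).card → 2 ≤ (L v₃).card → 3 ≤ (L u₁).card → ColorableOn G A L := by
    intro L b1 b2 b3 b4 b5 b6
    obtain ⟨cu, mu⟩ := Finset.card_pos.mp b1
    obtain ⟨cv, mv, ev⟩ := pick2' _ cu b2
    obtain ⟨c1, m1, f1⟩ := pick2' _ cv b3
    obtain ⟨c2, m2, f2v, f21⟩ := pick3' _ cv c1 b4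
    obtain ⟨c3, m3, f32⟩ := pick2' _ c2 b5
    obtain ⟨cf, mf, ff2, ff3⟩ := pick3' _ c2 c3 b6
    exact build L cu cv c1 c2 c3 cf mu mv m1 m2 m3 mf
      ev.symm f1.symm f2v.symm f21.symm f32.symm ff2.symm ff3.symm
  have O2 : ∀ L : V → Finset ℕ, 2 ≤ (L u).card → 1 ≤ (L v).card → 2 ≤ (L v₁).card →
      3 ≤ (L v₂).card → 2 ≤ (L v₃).card → 3 ≤ (L u₁).card → ColorableOn G A L := by
    intro L b1 b2 b3 b4 b5 b6
    obtain ⟨cv, mv⟩ := Finset.card_pos.mp b2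
    obtain ⟨c1, m1, f1⟩ := pick2' _ cv b3
    obtain ⟨cu, mu, fu⟩ := pick2' _ cv b1
    obtain ⟨c2, m2, f2v, f21⟩ := pick3' _ cv c1 b4
    obtain ⟨c3, m3, f32⟩ := pick2' _ c2 b5
    obtain ⟨cf, mf, ff2, ff3⟩ := pick3' _ c2 c3 b6
    exact build L cu cv c1 c2 c3 cf mu mv m1 m2 m3 mf
      fu f1.symm f2v.symm f21.symm f32.symm ff2.symm ff3.symm
  have O3 : ∀ L : V → Finset ℕ, 2 ≤ (L u).card → 2 ≤ (L v).card → 1 ≤ (L v₁).card →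
      3 ≤ (L v₂).card → 2 ≤ (L v₃).card → 3 ≤ (L u₁).card → ColorableOn G A L := by
    intro L b1 b2 b3 b4 b5 b6
    obtain ⟨c1, m1⟩ := Finset.card_pos.mp b3
    obtain ⟨cv, mv, fv⟩ := pick2' _ c1 b2
    obtain ⟨cu, mu, fu⟩ := pick2' _ cv b1
    obtain ⟨c2, m2, f2v, f21⟩ := pick3' _ cv c1 b4
    obtain ⟨c3, m3, f32⟩ := pick2' _ c2 b5
    obtain ⟨cf, mf, ff2, ff3⟩ := pick3' _ c2 c3 b6
    exact build L cu cv c1 c2 c3 cf mu mv m1 m2 m3 mf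
      fu fv f2v.symm f21.symm f32.symm ff2.symm ff3.symm
  have O4 : ∀ L : V → Finset ℕ, 2 ≤ (L u).card → 3 ≤ (L v).card → 2 ≤ (L v₁).card →
      1 ≤ (L v₂).card → 2 ≤ (L v₃).card → 3 ≤ (L u₁).card → ColorableOn G A L := by
    intro L b1 b2 b3 b4 b5 b6
    obtain ⟨c2, m2⟩ := Finset.card_pos.mp b4
    obtain ⟨c1, m1, f1⟩ := pick2' _ c2 b3
    obtain ⟨cv, mv, fv1, fv2⟩ := pick3' _ c1 c2 b2
    obtain ⟨cu, mu, fu⟩ := pick2' _ cv b1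
    obtain ⟨c3, m3, f32⟩ := pick2' _ c2 b5
    obtain ⟨cf, mf, ff2, ff3⟩ := pick3' _ c2 c3 b6
    exact build L cu cv c1 c2 c3 cf mu mv m1 m2 m3 mf
      fu fv1 fv2 f1 f32.symm ff2.symm ff3.symm
  have O5 : ∀ L : V → Finset ℕ, 2 ≤ (L u).card → 3 ≤ (L v).card → 2 ≤ (L v₁).card →
      2 ≤ (L v₂).card → 1 ≤ (L v₃).card → 3 ≤ (L u₁).card → ColorableOn G A L := by
    intro L b1 b2 b3 b4 b5 b6
    obtain ⟨c3, m3⟩ := Finset.card_pos.mp b5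
    obtain ⟨c2, m2, f2⟩ := pick2' _ c3 b4
    obtain ⟨c1, m1, f1⟩ := pick2' _ c2 b3
    obtain ⟨cv, mv, fv1, fv2⟩ := pick3' _ c1 c2 b2
    obtain ⟨cu, mu, fu⟩ := pick2' _ cv b1
    obtain ⟨cf, mf, ff2, ff3⟩ := pick3' _ c2 c3 b6
    exact build L cu cv c1 c2 c3 cf mu mv m1 m2 m3 mf
      fu fv1 fv2 f1 f2 ff2.symm ff3.symm
  have O6 : ∀ L : V → Finset ℕ, 2 ≤ (L u).card → 3 ≤ (L v).card → 2 ≤ (L v₁).card →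
      3 ≤ (L v₂).card → 2 ≤ (L v₃).card → 1 ≤ (L u₁).card → ColorableOn G A L := by
    intro L b1 b2 b3 b4 b5 b6
    obtain ⟨cf, mf⟩ := Finset.card_pos.mp b6
    obtain ⟨c3, m3, f3⟩ := pick2' _ cf b5
    obtain ⟨c2, m2, f2f, f23⟩ := pick3' _ cf c3 b4
    obtain ⟨c1, m1, f1⟩ := pick2' _ c2 b3
    obtain ⟨cv, mv, fv1, fv2⟩ := pick3' _ c1 c2 b2
    obtain ⟨cu, mu, fu⟩ := pick2' _ cv b1
    exact build L cu cv c1 c2 c3 cf mu mv m1 m2 m3 mf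
      fu fv1 fv2 f1 f23 f2f f3
  -- lower bounds on degrees inside A
  have hdegu : 1 ≤ degOn G A u := by
    have hsub : ({v} : Set V) ⊆ {w ∈ A | G.Adj u w} := by
      intro w hw; rcases hw with rfl; exact ⟨memv, huv⟩
    calc (1:ℕ) = ({v} : Set V).ncard := (Set.ncard_singleton _).symm
      _ ≤ _ := Set.ncard_le_ncard hsub (Set.toFinite _)
  have hdegu₁ : 2 ≤ degOn G A u₁ := by
    have hsub : ({v₂, v₃} : Set V) ⊆ {w ∈ A | G.Adj u₁ w} := by
      intro w hw; rcases hw with rfl | rfl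
      · exact ⟨memv₂, hu₁v₂⟩
      · exact ⟨memv₃, hv₃u₁.symm⟩
    have hcard : ({v₂, v₃} : Set V).ncard = 2 := by
      rw [Set.ncard_insert_of_notMem (by simp [d15]), Set.ncard_singleton]
    calc (2:ℕ) = ({v₂, v₃} : Set V).ncard := hcard.symm
      _ ≤ _ := Set.ncard_le_ncard hsub (Set.toFinite _)
  have hdegv : 3 ≤ degOn G A v := by
    have hsub : ({u, v₁, v₂} : Set V) ⊆ {w ∈ A | G.Adj v w} := by
      intro w hw; rcases hw with rfl | rfl | rfl
      · exact ⟨memu, huv.symm⟩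
      · exact ⟨memv₁, hvv₁⟩
      · exact ⟨memv₂, hv₂v.symm⟩
    have hcard : ({u, v₁, v₂} : Set V).ncard = 3 := by
      rw [Set.ncard_insert_of_notMem (by simp [d3, d4]),
        Set.ncard_insert_of_notMem (by simp [d13]), Set.ncard_singleton]
    calc (3:ℕ) = ({u, v₁, v₂} : Set V).ncard := hcard.symm
      _ ≤ _ := Set.ncard_le_ncard hsub (Set.toFinite _)
  have hdegv₁ : 2 ≤ degOn G A v₁ := by
    have hsub : ({v, v₂} : Set V) ⊆ {w ∈ A | G.Adj v₁ w} := by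
      intro w hw; rcases hw with rfl | rfl
      · exact ⟨memv, hvv₁.symm⟩
      · exact ⟨memv₂, hv₁v₂⟩
    have hcard : ({v, v₂} : Set V).ncard = 2 := by
      rw [Set.ncard_insert_of_notMem (by simp [d8]), Set.ncard_singleton]
    calc (2:ℕ) = ({v, v₂} : Set V).ncard := hcard.symm
      _ ≤ _ := Set.ncard_le_ncard hsub (Set.toFinite _)
  have hdegv₂ : 4 ≤ degOn G A v₂ := by
    have hsub : ({v, v₁, v₃, u₁} : Set V) ⊆ {w ∈ A | G.Adj v₂ w} := by
      intro w hw; rcases hw with rfl | rfl | rfl | rfl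
      · exact ⟨memv, hv₂v⟩
      · exact ⟨memv₁, hv₁v₂.symm⟩
      · exact ⟨memv₃, hv₂v₃⟩
      · exact ⟨memu₁, hu₁v₂.symm⟩
    have hcard : ({v, v₁, v₃, u₁} : Set V).ncard = 4 := by
      rw [Set.ncard_insert_of_notMem (by simp [d7, d9, d6]),
        Set.ncard_insert_of_notMem (by simp [d14, s10]),
        Set.ncard_insert_of_notMem (by simp [s12]), Set.ncard_singleton]
    calc (4:ℕ) = ({v, v₁, v₃, u₁} : Set V).ncard := hcard.symm
      _ ≤ _ := Set.ncard_le_ncard hsub (Set.toFinite _)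
  have hdegv₃ : 2 ≤ degOn G A v₃ := by
    have hsub : ({v₂, u₁} : Set V) ⊆ {w ∈ A | G.Adj v₃ w} := by
      intro w hw; rcases hw with rfl | rfl
      · exact ⟨memv₂, hv₂v₃.symm⟩
      · exact ⟨memu₁, hv₃u₁⟩
    have hcard : ({v₂, u₁} : Set V).ncard = 2 := by
      rw [Set.ncard_insert_of_notMem (by simp [s11]), Set.ncard_singleton]
    calc (2:ℕ) = ({v₂, u₁} : Set V).ncard := hcard.symm
      _ ≤ _ := Set.ncard_le_ncard hsub (Set.toFinite _)
  -- FIX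
  have hFIX : FIX G A 4 := by
    intro x hx L hL1 hL
    rw [hA] at hx
    simp only [Set.mem_insert_iff, Set.mem_singleton_iff] at hx
    rcases hx with rfl|rfl|rfl|rfl|rfl|rfl
    · refine O1 L hL1 ?_ ?_ ?_ ?_ ?_
      · have h := hL v memv s1; rw [hdv] at h; omega
      · have h := hL v₁ memv₁ s3; rw [hdv₁] at h; omega
      · have h := hL v₂ memv₂ s4; rw [hdv₂] at h; omega
      · have h := hL v₃ memv₃ s5; rw [hdv₃] at h; omega
      · have h := hL u₁ memu₁ s2; rw [hdu₁] at h; omega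
    · refine O2 L ?_ hL1 ?_ ?_ ?_ ?_
      · have h := hL u memu d1; rw [hdu] at h; omega
      · have h := hL v₁ memv₁ s7; rw [hdv₁] at h; omega
      · have h := hL v₂ memv₂ s8; rw [hdv₂] at h; omega
      · have h := hL v₃ memv₃ s9; rw [hdv₃] at h; omega
      · have h := hL u₁ memu₁ s6; rw [hdu₁] at h; omega
    · refine O6 L ?_ ?_ ?_ ?_ ?_ hL1
      · have h := hL u memu d2; rw [hdu] at h; omega
      · have h := hL v memv d6; rw [hdv] at h; omega
      · have h := hL v₁ memv₁ s10; rw [hdv₁] at h; omega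
      · have h := hL v₂ memv₂ s11; rw [hdv₂] at h; omega
      · have h := hL v₃ memv₃ s12; rw [hdv₃] at h; omega
    · refine O3 L ?_ ?_ hL1 ?_ ?_ ?_
      · have h := hL u memu d3; rw [hdu] at h; omega
      · have h := hL v memv d7; rw [hdv] at h; omega
      · have h := hL v₂ memv₂ s13; rw [hdv₂] at h; omega
      · have h := hL v₃ memv₃ s14; rw [hdv₃] at h; omega
      · have h := hL u₁ memu₁ d10; rw [hdu₁] at h; omega
    · refine O4 L ?_ ?_ ?_ hL1 ?_ ?_
      · have h := hL u memu d4; rw [hdu] at h; omega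
      · have h := hL v memv d8; rw [hdv] at h; omega
      · have h := hL v₁ memv₁ d13; rw [hdv₁] at h; omega
      · have h := hL v₃ memv₃ s15; rw [hdv₃] at h; omega
      · have h := hL u₁ memu₁ d11; rw [hdu₁] at h; omega
    · refine O5 L ?_ ?_ ?_ ?_ hL1 ?_
      · have h := hL u memu d5; rw [hdu] at h; omega
      · have h := hL v memv d9; rw [hdv] at h; omega
      · have h := hL v₁ memv₁ d14; rw [hdv₁] at h; omega
      · have h := hL v₂ memv₂ d15; rw [hdv₂] at h; omega
      · have h := hL u₁ memu₁ d12; rw [hdu₁] at h; omega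
  -- FORB
  have hFORB : FORB G A 4 := by
    intro S hSA hSind hScard L hL
    have hind_le : ∀ w, S.indicator (fun _ => (1:ℤ)) w ≤ 1 := by
      intro w; by_cases h : w ∈ S <;> simp [h]
    have hind0 : ∀ w, w ∉ S → S.indicator (fun _ => (1:ℤ)) w = 0 :=
      fun w h => Set.indicator_of_notMem h _
    -- adjacency inside gOn G A
    have guv : (gOn G A).Adj u v := ⟨memu, memv, huv⟩
    have gvv₁ : (gOn G A).Adj v v₁ := ⟨memv, memv₁, hvv₁⟩
    have gvv₂ : (gOn G A).Adj v v₂ := ⟨memv, memv₂, hv₂v.symm⟩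
    have gv₁v₂ : (gOn G A).Adj v₁ v₂ := ⟨memv₁, memv₂, hv₁v₂⟩
    have gv₂v₃ : (gOn G A).Adj v₂ v₃ := ⟨memv₂, memv₃, hv₂v₃⟩
    have gv₂u₁ : (gOn G A).Adj v₂ u₁ := ⟨memv₂, memu₁, hu₁v₂.symm⟩
    by_cases h3 : v₃ ∈ S
    · have hnu : u ∉ S := fun h => no_p4' hSind h h3 guv gvv₂ gv₂v₃ d4 d5 d9
      have hnv : v ∉ S := fun h => no_p3' hSind h h3 gvv₂ gv₂v₃ d9
      have hnv₁ : v₁ ∉ S := fun h => no_p3' hSind h h3 gv₁v₂ gv₂v₃ d14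
      have hnu₁ : u₁ ∉ S := fun h => no_p3' hSind h h3 gv₂u₁.symm gv₂v₃ d12
      refine O5 L ?_ ?_ ?_ ?_ ?_ ?_
      · have h := hL u memu; rw [hdu, hind0 u hnu] at h; omega
      · have h := hL v memv; rw [hdv, hind0 v hnv] at h; omega
      · have h := hL v₁ memv₁; rw [hdv₁, hind0 v₁ hnv₁] at h; omega
      · have h := hL v₂ memv₂; rw [hdv₂] at h; have := hind_le v₂; omega
      · have h := hL v₃ memv₃; rw [hdv₃] at h; have := hind_le v₃; omega
      · have h := hL u₁ memu₁; rw [hdu₁, hind0 u₁ hnu₁] at h; omega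
    · by_cases h4 : u₁ ∈ S
      · have hnu : u ∉ S := fun h => no_p4' hSind h h4 guv gvv₂ gv₂u₁ d4 d2 d6
        have hnv : v ∉ S := fun h => no_p3' hSind h h4 gvv₂ gv₂u₁ d6
        have hnv₁ : v₁ ∉ S := fun h => no_p3' hSind h h4 gv₁v₂ gv₂u₁ s10
        refine O6 L ?_ ?_ ?_ ?_ ?_ ?_
        · have h := hL u memu; rw [hdu, hind0 u hnu] at h; omega
        · have h := hL v memv; rw [hdv, hind0 v hnv] at h; omega
        · have h := hL v₁ memv₁; rw [hdv₁, hind0 v₁ hnv₁] at h; omega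
        · have h := hL v₂ memv₂; rw [hdv₂] at h; have := hind_le v₂; omega
        · have h := hL v₃ memv₃; rw [hdv₃, hind0 v₃ h3] at h; omega
        · have h := hL u₁ memu₁; rw [hdu₁] at h; have := hind_le u₁; omega
      · by_cases h1 : v₁ ∈ S
        · have hnu : u ∉ S := fun h => no_p3' hSind h h1 guv gvv₁ d3
          refine O3 L ?_ ?_ ?_ ?_ ?_ ?_
          · have h := hL u memu; rw [hdu, hind0 u hnu] at h; omega
          · have h := hL v memv; rw [hdv] at h; have := hind_le v; omega
          · have h := hL v₁ memv₁; rw [hdv₁] at h; have := hind_le v₁; omega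
          · have h := hL v₂ memv₂; rw [hdv₂] at h; have := hind_le v₂; omega
          · have h := hL v₃ memv₃; rw [hdv₃, hind0 v₃ h3] at h; omega
          · have h := hL u₁ memu₁; rw [hdu₁, hind0 u₁ h4] at h; omega
        · refine O1 L ?_ ?_ ?_ ?_ ?_ ?_
          · have h := hL u memu; rw [hdu] at h; have := hind_le u; omega
          · have h := hL v memv; rw [hdv] at h; have := hind_le v; omega
          · have h := hL v₁ memv₁; rw [hdv₁, hind0 v₁ h1] at h; omega
          · have h := hL v₂ memv₂; rw [hdv₂] at h; have := hind_le v₂; omega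
          · have h := hL v₃ memv₃; rw [hdv₃, hind0 v₃ h3] at h; omega
          · have h := hL u₁ memu₁; rw [hdu₁, hind0 u₁ h4] at h; omega
  refine ⟨⟨hFIX, hFORB⟩, A, ⟨u, memu⟩, ?_, hFIX, hFORB⟩
  rw [hA]
  have i1 := Set.ncard_insert_le u ({v, u₁, v₁, v₂, v₃} : Set V)
  have i2 := Set.ncard_insert_le v ({u₁, v₁, v₂, v₃} : Set V)
  have i3 := Set.ncard_insert_le u₁ ({v₁, v₂, v₃} : Set V)
  have i4 := Set.ncard_insert_le v₁ ({v₂, v₃} : Set V)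
  have i5 := Set.ncard_insert_le v₂ ({v₃} : Set V)
  have i6 : ({v₃} : Set V).ncard = 1 := Set.ncard_singleton _
  omega
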